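/- Let A and B be two finite multisets in ℤ_p that are weakly equivalent, and suppose that A has p-adic non-Liouville differences. Then A and B are equivalent. -/

import Mathlib

open Filter

/-- `padicDist p m a` is `d_m(a) = min {|h| : h ∈ ℤ, a ≡ h (mod p^m ℤ_p)}`. -/
noncomputable def padicDist (p : ℕ) [Fact p.Prime] (m : ℕ) (a : ℤ_[p]) : ℕ :=
  sInf {k : ℕ | ∃ h : ℤ, h.natAbs = k ∧ (p : ℤ_[p]) ^ m ∣ a - (h : ℤ_[p])}

/-- `a ∈ ℤ_p` is a p-adic Liouville number if `a ∉ ℤ` and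
`liminf_{m→∞} d_m(a)/m < +∞`. -/
def IsPadicLiouville (p : ℕ) [Fact p.Prime] (a : ℤ_[p]) : Prop :=
  (∀ n : ℤ, a ≠ (n : ℤ_[p])) ∧
    liminf (fun m : ℕ => (((padicDist p m a : ℝ) / (m : ℝ)) : EReal)) atTop < (⊤ : EReal)

/-- Two finite multisets in `ℤ_p` are weakly equivalent: there exist orderings
`a_1,…,a_n`, `b_1,…,b_n`, a constant `c > 0`, and for each `m ≥ 1` a permutation `σ_m`
with `d_m(a_{σ_m i} - b_i) ≤ c m`. -/
def WeaklyEquivalent (p : ℕ) [Fact p.Prime] (A B : Multiset ℤ_[p]) : Prop :=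
  ∃ (n : ℕ) (a b : Fin n → ℤ_[p]) (c : ℝ),
    A = ↑(List.ofFn a) ∧ B = ↑(List.ofFn b) ∧ 0 < c ∧
    ∀ m : ℕ, 1 ≤ m → ∃ σ : Equiv.Perm (Fin n),
      ∀ i, (padicDist p m (a (σ i) - b i) : ℝ) ≤ c * m

/-- Two finite multisets in `ℤ_p` are equivalent: there exist orderings with
`a_i - b_i ∈ ℤ` for all `i`. -/
def EquivalentMultisets (p : ℕ) [Fact p.Prime] (A B : Multiset ℤ_[p]) : Prop :=
  ∃ (n : ℕ) (a b : Fin n → ℤ_[p]),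
    A = ↑(List.ofFn a) ∧ B = ↑(List.ofFn b) ∧
    ∀ i, ∃ k : ℤ, a i - b i = (k : ℤ_[p])

/-- `P 0, …, P (k-1)` form a Liouville partition of `A`: their multiset union is `A` and
no two elements of distinct parts differ by an integer or a p-adic Liouville number. -/
def IsLiouvillePartition (p : ℕ) [Fact p.Prime] (A : Multiset ℤ_[p]) {k : ℕ}
    (P : Fin k → Multiset ℤ_[p]) : Prop :=
  (∑ g, P g) = A ∧
    ∀ g h : Fin k, g ≠ h → ∀ x ∈ P g, ∀ y ∈ P h,
      ¬ ((∃ n : ℤ, x - y = (n : ℤ_[p])) ∨ IsPadicLiouville p (x - y))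

/-- A multiset is p-adic non-Liouville if it contains no p-adic Liouville number. -/
def PadicNonLiouvilleMultiset (p : ℕ) [Fact p.Prime] (A : Multiset ℤ_[p]) : Prop :=
  ∀ a ∈ A, ¬ IsPadicLiouville p a

/-- The difference multiset `A - A = {a - a' : a, a' ∈ A}`. -/
noncomputable def diffMultiset (p : ℕ) [Fact p.Prime] (A : Multiset ℤ_[p]) : Multiset ℤ_[p] :=
  A.bind fun x => A.map fun y => x - y

section Aux
variable (p : ℕ) [Fact p.Prime]

lemma padicDist_exists_witness (m : ℕ) (x : ℤ_[p]) :
    ∃ h : ℤ, h.natAbs = padicDist p m x ∧ (p : ℤ_[p]) ^ m ∣ x - (h : ℤ_[p]) := by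
  have hne : {k : ℕ | ∃ h : ℤ, h.natAbs = k ∧ (p : ℤ_[p]) ^ m ∣ x - (h : ℤ_[p])}.Nonempty := by
    refine ⟨(x.appr m : ℤ).natAbs, (x.appr m : ℤ), rfl, ?_⟩
    have := x.appr_spec m
    rw [Ideal.mem_span_singleton] at this
    simpa using this
  exact Nat.sInf_mem hne

lemma padicDist_le (m : ℕ) {x : ℤ_[p]} {h : ℤ} (hd : (p : ℤ_[p]) ^ m ∣ x - (h : ℤ_[p])) :
    padicDist p m x ≤ h.natAbs :=
  Nat.sInf_le ⟨h, rfl, hd⟩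

lemma padicDist_sub_le (m : ℕ) (x y : ℤ_[p]) :
    padicDist p m (x - y) ≤ padicDist p m x + padicDist p m y := by
  obtain ⟨hx, hx1, hx2⟩ := padicDist_exists_witness p m x
  obtain ⟨hy, hy1, hy2⟩ := padicDist_exists_witness p m y
  have hd : (p : ℤ_[p]) ^ m ∣ (x - y) - ((hx - hy : ℤ) : ℤ_[p]) := by
    push_cast
    have := dvd_sub hx2 hy2
    convert this using 1; ring
  calc padicDist p m (x - y) ≤ (hx - hy).natAbs := padicDist_le p m hd
    _ ≤ hx.natAbs + hy.natAbs := Int.natAbs_sub_le _ _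
    _ = _ := by rw [hx1, hy1]

lemma padicDist_intCast_le (m : ℕ) (k : ℤ) : padicDist p m ((k : ℤ_[p])) ≤ k.natAbs :=
  padicDist_le p m (by simp)

lemma padicDist_mono {m m' : ℕ} (hmm : m ≤ m') (x : ℤ_[p]) :
    padicDist p m x ≤ padicDist p m' x := by
  obtain ⟨h, h1, h2⟩ := padicDist_exists_witness p m' x
  have := padicDist_le p m ((pow_dvd_pow (p : ℤ_[p]) hmm).trans h2)
  omega

lemma aux_linear_lt_two_pow (a : ℕ) : ∀ m, 2 * a + 4 ≤ m → a * m + a < 2 ^ m := by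
  intro m hm
  induction m, hm using Nat.le_induction with
  | base =>
      have h1 : a + 1 ≤ 2 ^ a := Nat.lt_two_pow_self (n := a)
      have h2 : (2:ℕ) ^ (2 * a + 4) = 16 * (2 ^ a * 2 ^ a) := by
        rw [show 2 * a + 4 = a + a + 4 by ring, pow_add, pow_add]; ring
      rw [h2]
      nlinarith [h1, Nat.one_le_two_pow (n := a)]
  | succ m hm ih =>
      have h1 : a ≤ m := by omega
      have h2 : m < 2 ^ m := Nat.lt_two_pow_self (n := m)
      have h3 : (2:ℕ) ^ (m + 1) = 2 ^ m + 2 ^ m := by ring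
      have : a * (m + 1) + a = (a * m + a) + a := by ring
      omega

/-- If `d_m(x)` is bounded by a linear function of `m` for all large `m`, then `x ∈ ℤ`. -/
lemma int_of_padicDist_linear_bound {x : ℤ_[p]} {C K m₀ : ℕ}
    (H : ∀ m, m₀ ≤ m → padicDist p m x ≤ C * m + K) : ∃ k : ℤ, x = (k : ℤ_[p]) := by
  have hp2 : 2 ≤ p := (Fact.out : p.Prime).two_le
  choose h h1 h2 using fun m => padicDist_exists_witness p m x
  set a := 3 * C + 2 * K with ha
  set M := max (max m₀ 1) (2 * a + 4) with hM
  have key : ∀ m, M ≤ m → h (m + 1) = h m := by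
    intro m hm
    have hm0 : m₀ ≤ m := le_trans (le_trans (le_max_left _ _) (le_max_left _ _)) hm
    have hm1 : 1 ≤ m := le_trans (le_trans (le_max_right _ _) (le_max_left _ _)) hm
    have hbound : (h (m + 1) - h m).natAbs < p ^ m := by
      have b1 : (h (m+1)).natAbs ≤ C * (m+1) + K := by rw [h1]; exact H (m+1) (by omega)
      have b2 : (h m).natAbs ≤ C * m + K := by rw [h1]; exact H m hm0
      have b3 : (h (m + 1) - h m).natAbs ≤ a * m + a := by
        have ht := Int.natAbs_sub_le (h (m+1)) (h m)
        have hCm : C ≤ C * m := Nat.le_mul_of_pos_right C (by omega)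
        have hKm : K ≤ K * m := Nat.le_mul_of_pos_right K (by omega)
        rw [ha]
        have e1 : (h (m + 1) - h m).natAbs ≤ (C * (m+1) + K) + (C * m + K) := by omega
        have e2 : C * (m + 1) = C * m + C := by ring
        have e3 : (3 * C + 2 * K) * m + (3 * C + 2 * K)
            = C * m + C * m + C * m + K * m + K * m + 3 * C + 2 * K := by ring
        linarith [Nat.zero_le (C * m), Nat.zero_le (K * m)]
      have b4 : a * m + a < 2 ^ m := aux_linear_lt_two_pow a m (le_trans (le_max_right _ _) hm)
      have b5 : (2:ℕ) ^ m ≤ p ^ m := Nat.pow_le_pow_left hp2 m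
      omega
    have hdvd : ((p : ℤ) ^ m) ∣ (h (m + 1) - h m) := by
      rw [← PadicInt.norm_int_le_pow_iff_dvd]
      have hd : (p : ℤ_[p]) ^ m ∣ ((h (m+1) - h m : ℤ) : ℤ_[p]) := by
        push_cast
        have hd1 := h2 m
        have hd2 := (pow_dvd_pow (p : ℤ_[p]) (Nat.le_succ m)).trans (h2 (m+1))
        have := dvd_sub hd1 hd2
        convert this using 1; ring
      rwa [PadicInt.norm_le_pow_iff_mem_span_pow, Ideal.mem_span_singleton]
    have habs : (h (m + 1) - h m).natAbs < ((p:ℤ) ^ m).natAbs := by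
      rw [Int.natAbs_pow]; simpa using hbound
    have : h (m + 1) - h m = 0 := by
      rcases eq_or_ne (h (m + 1) - h m) 0 with h0 | h0
      · exact h0
      · exfalso
        have hpos : 0 < |h (m + 1) - h m| := abs_pos.mpr h0
        have hled := Int.le_of_dvd hpos ((dvd_abs _ _).mpr hdvd)
        have hlt : |h (m + 1) - h m| < (p:ℤ) ^ m := by
          rw [Int.abs_eq_natAbs]
          have : ((p:ℤ) ^ m) = ((p ^ m : ℕ) : ℤ) := by push_cast; ring
          rw [this]
          exact_mod_cast hbound
        omega
    omega
  have hconst : ∀ m, M ≤ m → h m = h M := by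
    intro m hm
    induction m, hm using Nat.le_induction with
    | base => rfl
    | succ m hm ih => rw [key m hm, ih]
  refine ⟨h M, ?_⟩
  have hp1 : (1:ℝ) < p := by exact_mod_cast hp2.trans_lt' one_lt_two |>.trans_le le_rfl |>.le.lt_of_ne (by exact_mod_cast (by omega : 1 ≠ p))
  have hz : ∀ m, M ≤ m → ‖x - ((h M : ℤ) : ℤ_[p])‖ ≤ (p : ℝ) ^ (-(m:ℤ)) := by
    intro m hm
    rw [← hconst m hm]
    have := h2 m
    rw [PadicInt.norm_le_pow_iff_mem_span_pow, Ideal.mem_span_singleton]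
    exact this
  rw [← sub_eq_zero]
  by_contra hzne
  have hz0 : 0 < ‖x - ((h M : ℤ) : ℤ_[p])‖ := by
    rw [norm_pos_iff]; exact hzne
  obtain ⟨m, hm⟩ := pow_unbounded_of_one_lt (‖x - ((h M : ℤ) : ℤ_[p])‖⁻¹) hp1
  have hle := hz (m + M) (by omega)
  have hpow : (p:ℝ) ^ m ≤ (p:ℝ) ^ (m + M) := pow_le_pow_right₀ hp1.le (by omega)
  have heq : (p : ℝ) ^ (-((m + M : ℕ):ℤ)) = ((p:ℝ) ^ (m + M))⁻¹ := by
    rw [zpow_neg, zpow_natCast]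
  rw [heq] at hle
  have h1' : ((p:ℝ) ^ (m + M))⁻¹ < ‖x - ((h M : ℤ) : ℤ_[p])‖ := by
    rw [inv_lt_comm₀ (by positivity) hz0]
    exact lt_of_lt_of_le hm hpow
  linarith
end Aux

/-- If `A` and `B` are weakly equivalent finite multisets in `ℤ_p` and
`A` has p-adic non-Liouville differences, then `A` and `B` are equivalent. -/
theorem equivalent_of_weaklyEquivalent_of_nonLiouville_differences
    (p : ℕ) [Fact p.Prime] (A B : Multiset ℤ_[p])
    (h : WeaklyEquivalent p A B)
    (hA : PadicNonLiouvilleMultiset p (diffMultiset p A)) :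
    EquivalentMultisets p A B := by
  classical
  obtain ⟨n, a, b, c, hA', hB', hc, hσ⟩ := h
  have hσ1 : ∀ m : ℕ, ∃ σ : Equiv.Perm (Fin n),
      1 ≤ m → ∀ i, (padicDist p m (a (σ i) - b i) : ℝ) ≤ c * m := by
    intro m
    by_cases h1 : 1 ≤ m
    · obtain ⟨σ, hs⟩ := hσ m h1; exact ⟨σ, fun _ => hs⟩
    · exact ⟨1, fun hh => absurd hh h1⟩
  choose s hs using hσ1
  have hmemA : ∀ j, a j ∈ A := by
    intro j; rw [hA', Multiset.mem_coe, List.mem_ofFn]; exact ⟨j, rfl⟩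
  have hev : ∀ᶠ m in atTop, (1 ≤ m ∧ ∀ j l : Fin n,
      (∀ k : ℤ, a j - a l ≠ (k : ℤ_[p])) →
      3 * c * m < (padicDist p m (a j - a l) : ℝ)) := by
    refine (eventually_ge_atTop 1).and ?_
    rw [eventually_all]
    intro j
    rw [eventually_all]
    intro l
    by_cases hint : ∀ k : ℤ, a j - a l ≠ (k : ℤ_[p])
    · have hmem : a j - a l ∈ diffMultiset p A := by
        unfold diffMultiset
        rw [Multiset.mem_bind]
        exact ⟨a j, hmemA j, Multiset.mem_map.mpr ⟨a l, hmemA l, rfl⟩⟩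
      have hnl := hA _ hmem
      have htop : liminf
          (fun m : ℕ => (((padicDist p m (a j - a l) : ℝ) / (m : ℝ)) : EReal)) atTop
          = (⊤ : EReal) := by
        by_contra hne
        exact hnl ⟨hint, lt_top_iff_ne_top.mpr hne⟩
      have hlt : ((3 * c : ℝ) : EReal) < liminf
          (fun m : ℕ => (((padicDist p m (a j - a l) : ℝ) / (m : ℝ)) : EReal)) atTop := by
        rw [htop]; exact EReal.coe_lt_top _
      have hev2 := eventually_lt_of_lt_liminf hlt
      filter_upwards [hev2, eventually_ge_atTop 1] with m hm hm1 _
      rw [show ((padicDist p m (a j - a l) : ℝ) : EReal) / ((m : ℝ) : EReal)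
            = (((padicDist p m (a j - a l) : ℝ) / (m : ℝ) : ℝ) : EReal) from
          (EReal.coe_div _ _).symm, EReal.coe_lt_coe_iff] at hm
      have hm0 : (0:ℝ) < m := by exact_mod_cast hm1
      exact (lt_div_iff₀ hm0).mp hm
    · exact Eventually.of_forall fun m hcon => absurd hcon hint
  obtain ⟨M₀, hM₀⟩ := eventually_atTop.mp hev
  have stepA : ∀ m, M₀ ≤ m → ∀ i, ∃ k : ℤ,
      a (s (m+1) i) - a (s m i) = (k : ℤ_[p]) := by
    intro m hm i
    by_contra hcon
    push_neg at hcon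
    obtain ⟨hm1, hgrow⟩ := hM₀ m hm
    have hlt := hgrow _ _ hcon
    have d1 : (padicDist p m (a (s (m+1) i) - b i) : ℝ) ≤ c * (m + 1) := by
      have h1 := hs (m+1) (by omega) i
      have hmono := padicDist_mono p (Nat.le_succ m) (a (s (m+1) i) - b i)
      have h2 : (padicDist p m (a (s (m+1) i) - b i) : ℝ)
          ≤ (padicDist p (m+1) (a (s (m+1) i) - b i) : ℝ) := by exact_mod_cast hmono
      refine h2.trans (h1.trans ?_)
      push_cast; ring_nf; exact le_rfl
    have d2 : (padicDist p m (a (s m i) - b i) : ℝ) ≤ c * m := hs m hm1 i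
    have d3 : padicDist p m (a (s (m+1) i) - a (s m i))
        ≤ padicDist p m (a (s (m+1) i) - b i) + padicDist p m (a (s m i) - b i) := by
      have harg : a (s (m+1) i) - a (s m i)
          = (a (s (m+1) i) - b i) - (a (s m i) - b i) := by ring
      rw [harg]
      exact padicDist_sub_le p m _ _
    have d3' : (padicDist p m (a (s (m+1) i) - a (s m i)) : ℝ)
        ≤ (padicDist p m (a (s (m+1) i) - b i) : ℝ)
          + (padicDist p m (a (s m i) - b i) : ℝ) := by exact_mod_cast d3
    have hm1' : (1:ℝ) ≤ m := by exact_mod_cast hm1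
    have hcm : c * 1 ≤ c * m := mul_le_mul_of_nonneg_left hm1' hc.le
    linarith
  have stepB : ∀ m, M₀ ≤ m → ∀ i, ∃ k : ℤ,
      a (s m i) - a (s M₀ i) = (k : ℤ_[p]) := by
    intro m hm
    induction m, hm using Nat.le_induction with
    | base => exact fun i => ⟨0, by simp⟩
    | succ m hm ih =>
        intro i
        obtain ⟨k1, hk1⟩ := stepA m hm i
        obtain ⟨k2, hk2⟩ := ih i
        refine ⟨k1 + k2, ?_⟩
        push_cast
        rw [← hk1, ← hk2]; ring
  set f : Fin n → Fin n → ℕ := fun j l =>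
    if hjl : ∃ k : ℤ, a j - a l = (k : ℤ_[p]) then hjl.choose.natAbs else 0 with hf
  set K := Finset.univ.sup (fun j => Finset.univ.sup (f j)) with hKdef
  have hK : ∀ j l (k : ℤ), a j - a l = (k : ℤ_[p]) → k.natAbs ≤ K := by
    intro j l k hk
    have hex : ∃ k : ℤ, a j - a l = (k : ℤ_[p]) := ⟨k, hk⟩
    have hkc : k = hex.choose := by
      have h1 := hex.choose_spec
      have h2 : ((k : ℤ) : ℤ_[p]) = ((hex.choose : ℤ) : ℤ_[p]) := hk.symm.trans h1
      exact_mod_cast h2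
    have hfl : f j l = k.natAbs := by rw [hf]; simp only [dif_pos hex]; rw [hkc]
    calc k.natAbs = f j l := hfl.symm
      _ ≤ Finset.univ.sup (f j) := Finset.le_sup (Finset.mem_univ l)
      _ ≤ K := Finset.le_sup (f := fun j => Finset.univ.sup (f j)) (Finset.mem_univ j)
  have stepC : ∀ i, ∃ k : ℤ, a (s M₀ i) - b i = (k : ℤ_[p]) := by
    intro i
    apply int_of_padicDist_linear_bound p (C := Nat.ceil c) (K := K) (m₀ := M₀)
    intro m hm
    obtain ⟨hm1, _⟩ := hM₀ m hm
    obtain ⟨k, hk⟩ := stepB m hm i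
    have hkK : k.natAbs ≤ K := hK _ _ k hk
    have d1 : padicDist p m (a (s M₀ i) - b i)
        ≤ padicDist p m (a (s m i) - b i) + padicDist p m ((k : ℤ_[p])) := by
      have harg : a (s M₀ i) - b i = (a (s m i) - b i) - (k : ℤ_[p]) := by
        rw [← hk]; ring
      rw [harg]
      exact padicDist_sub_le p m _ _
    have d2 : padicDist p m ((k : ℤ_[p])) ≤ K :=
      le_trans (padicDist_intCast_le p m k) hkK
    have d3 : (padicDist p m (a (s m i) - b i) : ℝ) ≤ c * m := hs m hm1 i
    have d4 : (padicDist p m (a (s m i) - b i) : ℝ) ≤ (Nat.ceil c : ℝ) * m :=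
      le_trans d3 (mul_le_mul_of_nonneg_right (Nat.le_ceil c) (by positivity))
    have d5 : padicDist p m (a (s m i) - b i) ≤ Nat.ceil c * m := by exact_mod_cast d4
    omega
  refine ⟨n, fun i => a (s M₀ i), b, ?_, hB', stepC⟩
  rw [hA']
  have h1 : (↑(List.ofFn fun i => a (s M₀ i)) : Multiset ℤ_[p])
      = Multiset.map a (Multiset.map (s M₀) Finset.univ.val) := by
    rw [Multiset.map_map, ← Fin.univ_val_map]
    rfl
  rw [h1, Multiset.map_univ_val_equiv (s M₀ : Fin n ≃ Fin n), Fin.univ_val_map]
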